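/- Let q = 2^p with p prime, and consider in PΓL_2(q) the stabilizer of the decomposition α = {⟨e_1⟩, ⟨e_2⟩} and of β = {⟨e_1⟩, ⟨e_1 + e_2⟩}. This intersection equals the Galois group Gal(F_{2^p}/F_2) and has prime order p. -/

import Mathlib

open Pointwise

noncomputable section

/-- The field `𝔽_q` with `q = 2^p`. -/
abbrev Fq (p : ℕ) : Type := GaloisField 2 p

/-- The vector space `V = 𝔽_q²`. -/
abbrev Vp (p : ℕ) : Type := Fin 2 → Fq p

/-- `SL₂(q)`. -/
abbrev SL2 (p : ℕ) : Type := Matrix.SpecialLinearGroup (Fin 2) (Fq p)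

/-- The Galois group `Gal(𝔽_q/𝔽₂)`. -/
abbrev Gal2 (p : ℕ) : Type := Fq p ≃ₐ[ZMod 2] Fq p

/-- Entrywise action of a field automorphism on `SL₂(q)`. -/
def mapSL (p : ℕ) (σ : Gal2 p) : SL2 p →* SL2 p :=
  Matrix.SpecialLinearGroup.map σ.toRingEquiv.toRingHom

/-- The action of the Galois group on `SL₂(q)` by automorphisms. -/
def phi (p : ℕ) : Gal2 p →* MulAut (SL2 p) where
  toFun σ := MonoidHom.toMulEquiv (mapSL p σ) (mapSL p σ.symm)
    (MonoidHom.ext fun m => Subtype.ext (by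
      ext i j
      simp [mapSL, Matrix.SpecialLinearGroup.map]
      exact AlgEquiv.symm_apply_apply σ _))
    (MonoidHom.ext fun m => Subtype.ext (by
      ext i j
      simp [mapSL, Matrix.SpecialLinearGroup.map]
      exact AlgEquiv.apply_symm_apply σ _))
  map_one' := MulEquiv.ext fun m => Subtype.ext (by
    ext i j
    simp [mapSL, Matrix.SpecialLinearGroup.map]
    rfl)
  map_mul' := fun σ τ => MulEquiv.ext fun m => Subtype.ext (by
    ext i j
    simp [mapSL, Matrix.SpecialLinearGroup.map]
    rfl)

/-- The group `PΓL₂(q)`: for `q = 2^p` even, `PΓL₂(q)` is the semidirect product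
`SL₂(q) ⋊ Gal(𝔽_q/𝔽₂)`. -/
abbrev PGL (p : ℕ) : Type := SL2 p ⋊[phi p] Gal2 p

/-- The linear automorphism of `V` given by `v ↦ v ⬝ m⁻¹` on row vectors (so that
`m ↦ slEquiv p m` is a left action by multiplication of row vectors on the right). -/
def slEquiv (p : ℕ) (m : SL2 p) : Vp p ≃ₗ[Fq p] Vp p :=
  LinearEquiv.ofLinear
    (Matrix.vecMulLinear ((m⁻¹ : SL2 p) : Matrix (Fin 2) (Fin 2) (Fq p)))
    (Matrix.vecMulLinear ((m : SL2 p) : Matrix (Fin 2) (Fin 2) (Fq p)))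
    (by
      apply LinearMap.ext; intro v
      simp only [LinearMap.comp_apply, Matrix.vecMulLinear_apply, LinearMap.id_apply,
        Matrix.vecMul_vecMul, ← Matrix.SpecialLinearGroup.coe_mul, mul_inv_cancel,
        Matrix.SpecialLinearGroup.coe_one, Matrix.vecMul_one])
    (by
      apply LinearMap.ext; intro v
      simp only [LinearMap.comp_apply, Matrix.vecMulLinear_apply, LinearMap.id_apply,
        Matrix.vecMul_vecMul, ← Matrix.SpecialLinearGroup.coe_mul, inv_mul_cancel,
        Matrix.SpecialLinearGroup.coe_one, Matrix.vecMul_one])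

/-- The action of `SL₂(q)` on the lattice of subspaces of `V`. -/
def permOfSL (p : ℕ) : SL2 p →* Equiv.Perm (Submodule (Fq p) (Vp p)) where
  toFun m := (Submodule.orderIsoMapComap (slEquiv p m)).toEquiv
  map_one' := by
    apply Equiv.ext; intro W
    apply SetLike.ext; intro x
    rw [Equiv.Perm.coe_one, id_eq]
    show x ∈ Submodule.orderIsoMapComap (slEquiv p 1) W ↔ x ∈ W
    rw [Submodule.orderIsoMapComap_apply]
    simp [slEquiv, LinearEquiv.ofLinear_apply, Matrix.vecMulLinear_apply, inv_one,
      Matrix.SpecialLinearGroup.coe_one, Matrix.vecMul_one]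
  map_mul' := by
    intro m n
    apply Equiv.ext; intro W
    show Submodule.orderIsoMapComap (slEquiv p (m * n)) W
        = Submodule.orderIsoMapComap (slEquiv p m) (Submodule.orderIsoMapComap (slEquiv p n) W)
    apply SetLike.ext; intro x
    rw [Submodule.orderIsoMapComap_apply, Submodule.orderIsoMapComap_apply,
      Submodule.orderIsoMapComap_apply]
    simp only [Submodule.mem_map, slEquiv, LinearEquiv.ofLinear_apply,
      Matrix.vecMulLinear_apply]
    constructor
    · rintro ⟨y, hy, rfl⟩
      exact ⟨_, ⟨y, hy, rfl⟩, by
        show Matrix.vecMul (Matrix.vecMul y ((n⁻¹ : SL2 p) : Matrix (Fin 2) (Fin 2) (Fq p)))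
            ((m⁻¹ : SL2 p) : Matrix (Fin 2) (Fin 2) (Fq p))
          = Matrix.vecMul y (((m * n)⁻¹ : SL2 p) : Matrix (Fin 2) (Fin 2) (Fq p))
        rw [Matrix.vecMul_vecMul, ← Matrix.SpecialLinearGroup.coe_mul, ← mul_inv_rev]⟩
    · rintro ⟨_, ⟨y, hy, rfl⟩, rfl⟩
      exact ⟨y, hy, by
        show Matrix.vecMul y (((m * n)⁻¹ : SL2 p) : Matrix (Fin 2) (Fin 2) (Fq p))
          = Matrix.vecMul (Matrix.vecMul y ((n⁻¹ : SL2 p) : Matrix (Fin 2) (Fin 2) (Fq p)))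
            ((m⁻¹ : SL2 p) : Matrix (Fin 2) (Fin 2) (Fq p))
        rw [Matrix.vecMul_vecMul, ← Matrix.SpecialLinearGroup.coe_mul, mul_inv_rev]⟩

/-- The image of a subspace of `V` under the semilinear map induced by a field
automorphism (applied componentwise). -/
def galSub (p : ℕ) (σ : Gal2 p) (W : Submodule (Fq p) (Vp p)) : Submodule (Fq p) (Vp p) where
  carrier := (fun v => σ ∘ v) '' W
  add_mem' := by
    rintro _ _ ⟨x, hx, rfl⟩ ⟨y, hy, rfl⟩
    exact ⟨x + y, W.add_mem hx hy, by funext i; simp⟩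
  zero_mem' := ⟨0, W.zero_mem, by funext i; simp⟩
  smul_mem' := by
    rintro c _ ⟨x, hx, rfl⟩
    exact ⟨σ.symm c • x, W.smul_mem _ hx, by funext i; simp [map_mul]⟩

theorem galSub_comp (p : ℕ) (σ τ : Gal2 p) (W : Submodule (Fq p) (Vp p)) :
    galSub p σ (galSub p τ W) = galSub p (τ.trans σ) W := by
  apply SetLike.ext
  intro x
  constructor
  · rintro ⟨_, ⟨v, hv, rfl⟩, rfl⟩
    exact ⟨v, hv, rfl⟩
  · rintro ⟨v, hv, rfl⟩
    exact ⟨τ ∘ v, ⟨v, hv, rfl⟩, rfl⟩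

theorem galSub_eq_self (p : ℕ) (τ : Gal2 p) (hτ : ∀ x, τ x = x)
    (W : Submodule (Fq p) (Vp p)) : galSub p τ W = W := by
  apply SetLike.ext
  intro x
  constructor
  · rintro ⟨v, hv, rfl⟩
    have h : (⇑τ) ∘ v = v := funext fun i => hτ _
    simpa [h] using hv
  · intro hx
    exact ⟨x, hx, funext fun i => hτ _⟩

/-- The action of the Galois group on the lattice of subspaces of `V`. -/
def permOfGal (p : ℕ) : Gal2 p →* Equiv.Perm (Submodule (Fq p) (Vp p)) where
  toFun σ :=
    { toFun := galSub p σ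
      invFun := galSub p σ.symm
      left_inv := fun W => by
        rw [galSub_comp]
        exact galSub_eq_self p _ (fun x => σ.symm_apply_apply x) W
      right_inv := fun W => by
        rw [galSub_comp]
        exact galSub_eq_self p _ (fun x => σ.apply_symm_apply x) W }
  map_one' := Equiv.ext fun W => galSub_eq_self p 1 (fun x => rfl) W
  map_mul' := fun σ τ => Equiv.ext fun W => (galSub_comp p σ τ W).symm

/-- The action of `PΓL₂(q)` on the lattice of subspaces of `V`. -/
theorem sigma_vecMul (p : ℕ) (σ : Gal2 p) (A : Matrix (Fin 2) (Fin 2) (Fq p)) (z : Vp p) :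
    (⇑σ) ∘ Matrix.vecMul z A = Matrix.vecMul ((⇑σ) ∘ z) (A.map ⇑σ) := by
  funext j
  simp [Matrix.vecMul, dotProduct, map_sum, map_mul]

/-- The action of `PΓL₂(q)` on the lattice of subspaces of `V`. -/
def rho (p : ℕ) : PGL p →* Equiv.Perm (Submodule (Fq p) (Vp p)) :=
  SemidirectProduct.lift (permOfSL p) (permOfGal p) (by
    intro σ
    apply MonoidHom.ext; intro m
    apply Equiv.ext; intro W
    have key : ∀ y : Vp p,
        (⇑σ) ∘ ((slEquiv p m) ((⇑σ.symm) ∘ y)) = (slEquiv p ((phi p σ) m)) y := by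
      intro y
      show (⇑σ) ∘ Matrix.vecMul ((⇑σ.symm) ∘ y) ((m⁻¹ : SL2 p) : Matrix (Fin 2) (Fin 2) (Fq p))
          = Matrix.vecMul y ((((phi p σ) m)⁻¹ : SL2 p) : Matrix (Fin 2) (Fin 2) (Fq p))
      rw [sigma_vecMul]
      have h2 : (⇑σ) ∘ (⇑σ.symm) ∘ y = y := funext fun i => σ.apply_symm_apply _
      rw [h2, ← map_inv]
      rfl
    show Submodule.orderIsoMapComap (slEquiv p ((phi p σ) m)) W =
      (permOfGal p σ) ((Submodule.orderIsoMapComap (slEquiv p m)).toEquiv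
        (((permOfGal p σ)⁻¹ : Equiv.Perm (Submodule (Fq p) (Vp p))) W))
    apply SetLike.ext; intro x
    constructor
    · intro hx
      rw [Submodule.orderIsoMapComap_apply, Submodule.mem_map] at hx
      obtain ⟨y, hy, rfl⟩ := hx
      exact ⟨(slEquiv p m) ((⇑σ.symm) ∘ y), ⟨(⇑σ.symm) ∘ y, ⟨y, hy, rfl⟩, rfl⟩, key y⟩
    · rintro ⟨_, ⟨_, ⟨y, hy, rfl⟩, rfl⟩, rfl⟩
      rw [Submodule.orderIsoMapComap_apply, Submodule.mem_map]
      exact ⟨y, hy, (key y).symm⟩)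

instance pglSubmoduleAction (p : ℕ) : MulAction (PGL p) (Submodule (Fq p) (Vp p)) :=
  MulAction.compHom _ (rho p)

instance (p : ℕ) : DecidableEq (Submodule (Fq p) (Vp p)) := Classical.decEq _


namespace Stmt15Aux

variable {p : ℕ}

lemma smul_def (g : PGL p) (W : Submodule (Fq p) (Vp p)) : g • W = rho p g W := rfl

lemma rho_inl (m : SL2 p) : rho p (SemidirectProduct.inl m) = permOfSL p m :=
  SemidirectProduct.lift_inl _ _ _ m

lemma rho_inr (σ : Gal2 p) : rho p (SemidirectProduct.inr σ) = permOfGal p σ :=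
  SemidirectProduct.lift_inr _ _ _ σ

lemma permOfGal_span (σ : Gal2 p) (v : Vp p) (hv : ∀ i, σ (v i) = v i) :
    permOfGal p σ (Submodule.span (Fq p) {v}) = Submodule.span (Fq p) {v} := by
  apply SetLike.ext; intro x
  constructor
  · rintro ⟨w, hw, rfl⟩
    obtain ⟨c, rfl⟩ := Submodule.mem_span_singleton.mp hw
    refine Submodule.mem_span_singleton.mpr ⟨σ c, ?_⟩
    funext i
    simp [map_mul, hv i]
  · intro hx
    obtain ⟨c, rfl⟩ := Submodule.mem_span_singleton.mp hx
    refine ⟨σ.symm c • v, Submodule.smul_mem _ _ (Submodule.mem_span_singleton_self v), ?_⟩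
    funext i
    simp [map_mul, hv i]

lemma permOfSL_span (m : SL2 p) (v : Vp p) :
    permOfSL p m (Submodule.span (Fq p) {v}) =
      Submodule.span (Fq p)
        {Matrix.vecMul v ((m⁻¹ : SL2 p) : Matrix (Fin 2) (Fin 2) (Fq p))} := by
  show Submodule.orderIsoMapComap (slEquiv p m) _ = _
  rw [Submodule.orderIsoMapComap_apply, Submodule.map_span, Set.image_singleton]
  rfl

lemma vecMul_two (w : Vp p) (A : Matrix (Fin 2) (Fin 2) (Fq p)) (j : Fin 2) :
    Matrix.vecMul w A j = w 0 * A 0 j + w 1 * A 1 j := by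
  simp [Matrix.vecMul, dotProduct, Fin.sum_univ_two]

end Stmt15Aux

namespace Stmt15Aux

variable {p : ℕ}

local notation "v0" => (Pi.single 0 1 : Vp p)
local notation "v1" => (Pi.single 1 1 : Vp p)
local notation "v2" => ((Pi.single 0 1 : Vp p) + Pi.single 1 1)

lemma span_ne01 : Submodule.span (Fq p) {v0} ≠ Submodule.span (Fq p) {v1} := by
  intro h
  have h0 : (v0 : Vp p) ∈ Submodule.span (Fq p) {v1} := h ▸ Submodule.mem_span_singleton_self _
  obtain ⟨c, hc⟩ := Submodule.mem_span_singleton.mp h0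
  have := congrFun hc 0
  simp at this

lemma span_ne02 : Submodule.span (Fq p) {v0} ≠ Submodule.span (Fq p) {v2} := by
  intro h
  have h0 : (v0 : Vp p) ∈ Submodule.span (Fq p) {v2} := h ▸ Submodule.mem_span_singleton_self _
  obtain ⟨c, hc⟩ := Submodule.mem_span_singleton.mp h0
  have h1 := congrFun hc 0
  have h2 := congrFun hc 1
  simp at h1 h2
  rw [h1] at h2
  simp at h2

lemma span_ne12 : Submodule.span (Fq p) {v1} ≠ Submodule.span (Fq p) {v2} := by
  intro h
  have h0 : (v1 : Vp p) ∈ Submodule.span (Fq p) {v2} := h ▸ Submodule.mem_span_singleton_self _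
  obtain ⟨c, hc⟩ := Submodule.mem_span_singleton.mp h0
  have h1 := congrFun hc 0
  have h2 := congrFun hc 1
  simp at h1 h2
  rw [h1] at h2
  simp at h2

end Stmt15Aux

namespace Stmt15Aux

variable {p : ℕ}

local notation "v0" => (Pi.single 0 1 : Vp p)
local notation "v1" => (Pi.single 1 1 : Vp p)
local notation "v2" => ((Pi.single 0 1 : Vp p) + Pi.single 1 1)

lemma eq_one_of_fixes (m : SL2 p)
    (h0 : permOfSL p m (Submodule.span (Fq p) {v0}) = Submodule.span (Fq p) {v0})
    (h1 : permOfSL p m (Submodule.span (Fq p) {v1}) = Submodule.span (Fq p) {v1})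
    (h2 : permOfSL p m (Submodule.span (Fq p) {v2}) = Submodule.span (Fq p) {v2}) :
    m = 1 := by
  set A : Matrix (Fin 2) (Fin 2) (Fq p) := ((m⁻¹ : SL2 p) : Matrix (Fin 2) (Fin 2) (Fq p)) with hA
  rw [permOfSL_span] at h0 h1 h2
  obtain ⟨a, ha⟩ := Submodule.mem_span_singleton.mp
    (h0 ▸ Submodule.mem_span_singleton_self (Matrix.vecMul v0 A))
  obtain ⟨b, hb⟩ := Submodule.mem_span_singleton.mp
    (h1 ▸ Submodule.mem_span_singleton_self (Matrix.vecMul v1 A))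
  obtain ⟨c, hc⟩ := Submodule.mem_span_singleton.mp
    (h2 ▸ Submodule.mem_span_singleton_self (Matrix.vecMul v2 A))
  have ha0 := congrFun ha 0; have ha1 := congrFun ha 1
  have hb0 := congrFun hb 0; have hb1 := congrFun hb 1
  have hc0 := congrFun hc 0; have hc1 := congrFun hc 1
  simp [vecMul_two] at ha0 ha1 hb0 hb1 hc0 hc1
  have e01 : A 0 1 = 0 := ha1.symm
  have e10 : A 1 0 = 0 := hb0.symm
  have e11c : A 1 1 = c := by rw [hc1, e01, zero_add]
  have e1100 : A 1 1 = A 0 0 := by rw [e11c, hc0, e10, add_zero]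
  have hdet : A.det = 1 := Matrix.SpecialLinearGroup.det_coe (m⁻¹)
  rw [Matrix.det_fin_two, e01, e10, e1100, zero_mul, sub_zero] at hdet
  have hA00 : A 0 0 = 1 := by
    rcases mul_self_eq_one_iff.mp hdet with h | h
    · exact h
    · rw [h]; exact CharTwo.neg_eq 1
  have hAone : A = 1 := by
    ext i j
    fin_cases i <;> fin_cases j <;>
      simp [hA00, e01, e10, e1100.trans hA00, Matrix.one_apply]
  have hminv : m⁻¹ = 1 := Subtype.ext (by rw [← hA, hAone]; rfl)
  exact inv_eq_one.mp hminv

end Stmt15Aux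

open Stmt15Aux SemidirectProduct

/-- Let `q = 2^p`, `p` prime, and let `PΓL₂(q)` act on unordered pairs of distinct
`1`-dimensional subspaces of `V = 𝔽_q²`.  The intersection of the stabilizers of
`α = {⟨e₁⟩, ⟨e₂⟩}` and `β = {⟨e₁⟩, ⟨e₁ + e₂⟩}` is exactly the Galois group
`Gal(𝔽_{2^p}/𝔽₂)` (the factor `inr (Gal)` of the semidirect product), of prime order `p`. -/
theorem stmt_15 (p : ℕ) [Fact p.Prime] :
    MulAction.stabilizer (PGL p)
        ({Submodule.span (Fq p) {Pi.single 0 1}, Submodule.span (Fq p) {Pi.single 1 1}} :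
          Finset (Submodule (Fq p) (Vp p))) ⊓
      MulAction.stabilizer (PGL p)
        ({Submodule.span (Fq p) {Pi.single 0 1},
          Submodule.span (Fq p) {(Pi.single 0 1 : Vp p) + Pi.single 1 1}} :
          Finset (Submodule (Fq p) (Vp p))) =
      (SemidirectProduct.inr : Gal2 p →* PGL p).range ∧
    Nat.card ↥(MulAction.stabilizer (PGL p)
        ({Submodule.span (Fq p) {Pi.single 0 1}, Submodule.span (Fq p) {Pi.single 1 1}} :
          Finset (Submodule (Fq p) (Vp p))) ⊓
      MulAction.stabilizer (PGL p)
        ({Submodule.span (Fq p) {Pi.single 0 1},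
          Submodule.span (Fq p) {(Pi.single 0 1 : Vp p) + Pi.single 1 1}} :
          Finset (Submodule (Fq p) (Vp p)))) = p := by
  set L0 := Submodule.span (Fq p) {(Pi.single 0 1 : Vp p)} with hL0
  set L1 := Submodule.span (Fq p) {(Pi.single 1 1 : Vp p)} with hL1
  set L2 := Submodule.span (Fq p) {(Pi.single 0 1 : Vp p) + Pi.single 1 1} with hL2
  have pair : ∀ (g : PGL p) (a b : Submodule (Fq p) (Vp p)),
      g • ({a, b} : Finset (Submodule (Fq p) (Vp p))) = {g • a, g • b} := by
    intro g a b
    simp [Finset.smul_finset_insert, Finset.smul_finset_singleton]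
  have s0 : ∀ σ : Gal2 p, (inr σ : PGL p) • L0 = L0 := fun σ => by
    rw [smul_def, rho_inr]
    exact permOfGal_span σ _ (by intro i; fin_cases i <;> simp)
  have s1 : ∀ σ : Gal2 p, (inr σ : PGL p) • L1 = L1 := fun σ => by
    rw [smul_def, rho_inr]
    exact permOfGal_span σ _ (by intro i; fin_cases i <;> simp)
  have s2 : ∀ σ : Gal2 p, (inr σ : PGL p) • L2 = L2 := fun σ => by
    rw [smul_def, rho_inr]
    exact permOfGal_span σ _ (by intro i; fin_cases i <;> simp)
  have key : MulAction.stabilizer (PGL p) ({L0, L1} : Finset (Submodule (Fq p) (Vp p))) ⊓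
      MulAction.stabilizer (PGL p) ({L0, L2} : Finset (Submodule (Fq p) (Vp p))) =
      (inr : Gal2 p →* PGL p).range := by
    apply le_antisymm
    · intro g hg
      obtain ⟨hga, hgb⟩ := Subgroup.mem_inf.mp hg
      rw [MulAction.mem_stabilizer_iff] at hga hgb
      rw [pair] at hga hgb
      have m0a : g • L0 ∈ ({L0, L1} : Finset (Submodule (Fq p) (Vp p))) := by
        rw [← hga]; exact Finset.mem_insert_self _ _
      have m0b : g • L0 ∈ ({L0, L2} : Finset (Submodule (Fq p) (Vp p))) := by
        rw [← hgb]; exact Finset.mem_insert_self _ _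
      have m1 : g • L1 ∈ ({L0, L1} : Finset (Submodule (Fq p) (Vp p))) := by
        rw [← hga]; exact Finset.mem_insert_of_mem (Finset.mem_singleton_self _)
      have m2 : g • L2 ∈ ({L0, L2} : Finset (Submodule (Fq p) (Vp p))) := by
        rw [← hgb]; exact Finset.mem_insert_of_mem (Finset.mem_singleton_self _)
      have hg0 : g • L0 = L0 := by
        rcases Finset.mem_insert.mp m0a with h | h
        · exact h
        · rcases Finset.mem_insert.mp m0b with h' | h'
          · exact h'
          · exact absurd ((Finset.mem_singleton.mp h).symm.trans (Finset.mem_singleton.mp h'))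
              span_ne12
      have hg1 : g • L1 = L1 := by
        rcases Finset.mem_insert.mp m1 with h | h
        · exact absurd (smul_left_cancel g (h.trans hg0.symm)) (Ne.symm span_ne01)
        · exact Finset.mem_singleton.mp h
      have hg2 : g • L2 = L2 := by
        rcases Finset.mem_insert.mp m2 with h | h
        · exact absurd (smul_left_cancel g (h.trans hg0.symm)) (Ne.symm span_ne02)
        · exact Finset.mem_singleton.mp h
      have decomp : ∀ W : Submodule (Fq p) (Vp p),
          g • W = (inl g.left : PGL p) • ((inr g.right : PGL p) • W) := by
        intro W
        have := (mul_smul (inl g.left : PGL p) (inr g.right) W).symm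
        rw [inl_left_mul_inr_right] at this
        exact this.symm
      have unfold : ∀ W : Submodule (Fq p) (Vp p),
          (inl g.left : PGL p) • W = permOfSL p g.left W := by
        intro W; rw [smul_def, rho_inl]
      have f0 : permOfSL p g.left L0 = L0 := by
        have h := decomp L0; rw [s0, hg0, unfold] at h; exact h.symm
      have f1 : permOfSL p g.left L1 = L1 := by
        have h := decomp L1; rw [s1, hg1, unfold] at h; exact h.symm
      have f2 : permOfSL p g.left L2 = L2 := by
        have h := decomp L2; rw [s2, hg2, unfold] at h; exact h.symm
      have hleft : g.left = 1 := eq_one_of_fixes g.left f0 f1 f2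
      refine ⟨g.right, ?_⟩
      have hfin : g = inl g.left * inr g.right := (inl_left_mul_inr_right g).symm
      rw [hleft, map_one, one_mul] at hfin
      exact hfin.symm
    · rintro g ⟨σ, rfl⟩
      refine Subgroup.mem_inf.mpr ⟨?_, ?_⟩
      · exact MulAction.mem_stabilizer_iff.mpr (by rw [pair, s0 σ, s1 σ])
      · exact MulAction.mem_stabilizer_iff.mpr (by rw [pair, s0 σ, s2 σ])
  refine ⟨key, ?_⟩
  rw [key]
  have e : Nat.card ((inr : Gal2 p →* PGL p).range) = Nat.card (Gal2 p) :=
    Nat.card_congr (MonoidHom.ofInjective inr_injective).toEquiv.symm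
  rw [e, IsGalois.card_aut_eq_finrank,
    GaloisField.finrank 2 (Fact.out : p.Prime).ne_zero]

end
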